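/- Let H be a partial half-graph with sides L and R in which no two distinct vertices have equal neighborhoods and no vertex has empty neighborhood. Then |L| = |R| and H is isomorphic to the half-graph H_{|L|} via an isomorphism mapping L onto {v_1,…,v_{|L|}} and R onto {w_1,…,w_{|L|}}; in particular, the vertices of L can be labelled ℓ_1,…,ℓ_n and those of R labelled r_1,…,r_n so that the neighborhood of ℓ_i is exactly {r_i,…,r_n}. -/

import Mathlib

/-- The bipartite graph `G[L,R]` (with sides `L` and `R`, cross edges induced by `G`)
is a partial half-graph: it embeds into some half-graph `H_n`, with `L` going to the
left side and `R` to the right side, preserving edges and non-edges between the sides. -/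
def IsPartialHalfGraph {V : Type} (G : SimpleGraph V) (L R : Finset V) : Prop :=
  ∃ (n : ℕ) (f g : V → Fin n),
    Set.InjOn f (L : Set V) ∧ Set.InjOn g (R : Set V) ∧
    ∀ u ∈ L, ∀ v ∈ R, (G.Adj u v ↔ (f u : ℕ) ≤ (g v : ℕ))

/-- A partial half-graph `H` with sides `L`, `R` in which no two distinct vertices of the
same side have equal neighborhoods (in `H`) and no vertex has empty neighborhood satisfies
`|L| = |R|` and is isomorphic to the half-graph `H_{|L|}` via an isomorphism mapping `L`
onto the left side and `R` onto the right side: the vertices can be labelled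
`ℓ_1, …, ℓ_n` and `r_1, …, r_n` so that `ℓ_i` is adjacent to `r_j` exactly when `i ≤ j`
(i.e. the neighborhood of `ℓ_i` is exactly `{r_i, …, r_n}`). -/
theorem partialHalfGraph_no_twins_iso_halfGraph {V : Type} (G : SimpleGraph V)
    (L R : Finset V) (hLR : Disjoint L R) (hpart : IsPartialHalfGraph G L R)
    (htwinL : ∀ u ∈ L, ∀ u' ∈ L, (∀ v ∈ R, G.Adj u v ↔ G.Adj u' v) → u = u')
    (htwinR : ∀ v ∈ R, ∀ v' ∈ R, (∀ u ∈ L, G.Adj u v ↔ G.Adj u v') → v = v')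
    (hnonL : ∀ u ∈ L, ∃ v ∈ R, G.Adj u v)
    (hnonR : ∀ v ∈ R, ∃ u ∈ L, G.Adj u v) :
    L.card = R.card ∧
    ∃ (l r : Fin L.card → V),
      Function.Injective l ∧ Function.Injective r ∧
      (∀ i, l i ∈ L) ∧ (∀ i, r i ∈ R) ∧
      (∀ u ∈ L, ∃ i, l i = u) ∧ (∀ v ∈ R, ∃ i, r i = v) ∧
      ∀ i j : Fin L.card, (G.Adj (l i) (r j) ↔ (i : ℕ) ≤ (j : ℕ)) := by
  classical
  obtain ⟨n, f, g, hf, hg, hadj⟩ := hpart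
  set c : V → ℕ := fun u => (R.filter (fun v => (g v : ℕ) < (f u : ℕ))).card with hcdef
  set d : V → ℕ := fun v => (L.filter (fun u => (f u : ℕ) ≤ (g v : ℕ))).card with hddef
  -- monotonicity
  have hcmono : ∀ u u' : V, (f u : ℕ) ≤ (f u' : ℕ) → c u ≤ c u' := by
    intro u u' h
    apply Finset.card_le_card
    intro v hv
    simp only [Finset.mem_filter] at hv ⊢
    exact ⟨hv.1, lt_of_lt_of_le hv.2 h⟩
  have hdmono : ∀ v v' : V, (g v : ℕ) ≤ (g v' : ℕ) → d v ≤ d v' := by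
    intro v v' h
    apply Finset.card_le_card
    intro u hu
    simp only [Finset.mem_filter] at hu ⊢
    exact ⟨hu.1, le_trans hu.2 h⟩
  -- injectivity of c on L
  have hcinj : Set.InjOn c (L : Set V) := by
    have key : ∀ u ∈ L, ∀ u' ∈ L, (f u : ℕ) ≤ (f u' : ℕ) → c u = c u' → u = u' := by
      intro u hu u' hu' hle hcc
      have hsub : R.filter (fun v => (g v : ℕ) < (f u : ℕ)) ⊆
          R.filter (fun v => (g v : ℕ) < (f u' : ℕ)) := by
        intro v hv
        simp only [Finset.mem_filter] at hv ⊢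
        exact ⟨hv.1, lt_of_lt_of_le hv.2 hle⟩
      have heq := Finset.eq_of_subset_of_card_le hsub (le_of_eq hcc.symm)
      apply htwinL u hu u' hu'
      intro v hv
      rw [hadj u hu v hv, hadj u' hu' v hv]
      constructor
      · intro h
        by_contra h'
        push_neg at h'
        have : v ∈ R.filter (fun v => (g v : ℕ) < (f u' : ℕ)) := by
          simp only [Finset.mem_filter]; exact ⟨hv, h'⟩
        rw [← heq] at this
        simp only [Finset.mem_filter] at this
        omega
      · intro h
        by_contra h'
        push_neg at h'
        have : v ∈ R.filter (fun v => (g v : ℕ) < (f u : ℕ)) := by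
          simp only [Finset.mem_filter]; exact ⟨hv, h'⟩
        rw [heq] at this
        simp only [Finset.mem_filter] at this
        omega
    intro u hu u' hu' hcc
    rcases le_total ((f u : ℕ)) ((f u' : ℕ)) with h | h
    · exact key u hu u' hu' h hcc
    · exact (key u' hu' u hu h hcc.symm).symm
  -- injectivity of d on R
  have hdinj : Set.InjOn d (R : Set V) := by
    have key : ∀ v ∈ R, ∀ v' ∈ R, (g v : ℕ) ≤ (g v' : ℕ) → d v = d v' → v = v' := by
      intro v hv v' hv' hle hdd
      have hsub : L.filter (fun u => (f u : ℕ) ≤ (g v : ℕ)) ⊆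
          L.filter (fun u => (f u : ℕ) ≤ (g v' : ℕ)) := by
        intro u hu
        simp only [Finset.mem_filter] at hu ⊢
        exact ⟨hu.1, le_trans hu.2 hle⟩
      have heq := Finset.eq_of_subset_of_card_le hsub (le_of_eq hdd.symm)
      apply htwinR v hv v' hv'
      intro u hu
      rw [hadj u hu v hv, hadj u hu v' hv']
      constructor
      · intro h
        have : u ∈ L.filter (fun u => (f u : ℕ) ≤ (g v : ℕ)) := by
          simp only [Finset.mem_filter]; exact ⟨hu, h⟩
        rw [heq] at this
        simp only [Finset.mem_filter] at this
        exact this.2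
      · intro h
        have : u ∈ L.filter (fun u => (f u : ℕ) ≤ (g v' : ℕ)) := by
          simp only [Finset.mem_filter]; exact ⟨hu, h⟩
        rw [← heq] at this
        simp only [Finset.mem_filter] at this
        exact this.2
    intro v hv v' hv' hdd
    rcases le_total ((g v : ℕ)) ((g v' : ℕ)) with h | h
    · exact key v hv v' hv' h hdd
    · exact (key v' hv' v hv h hdd.symm).symm
  -- bounds
  have hclt : ∀ u ∈ L, c u < R.card := by
    intro u hu
    obtain ⟨v, hv, huv⟩ := hnonL u hu
    have hfg : (f u : ℕ) ≤ (g v : ℕ) := (hadj u hu v hv).1 huv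
    apply Finset.card_lt_card
    constructor
    · exact Finset.filter_subset _ _
    · intro hsub
      have := hsub hv
      simp only [Finset.mem_filter] at this
      omega
  have hd1 : ∀ v ∈ R, 1 ≤ d v := by
    intro v hv
    obtain ⟨u, hu, huv⟩ := hnonR v hv
    have hfg : (f u : ℕ) ≤ (g v : ℕ) := (hadj u hu v hv).1 huv
    have : u ∈ L.filter (fun u => (f u : ℕ) ≤ (g v : ℕ)) := by
      simp only [Finset.mem_filter]; exact ⟨hu, hfg⟩
    exact Finset.card_pos.2 ⟨u, this⟩
  have hdle : ∀ v ∈ R, d v ≤ L.card := fun v hv =>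
    Finset.card_le_card (Finset.filter_subset _ _)
  -- |L| = |R|
  have hLle : L.card ≤ R.card := by
    have := Finset.card_le_card_of_injOn c (fun u hu => Finset.mem_range.2 (hclt u hu))
      (fun u hu u' hu' h => hcinj hu hu' h)
    simpa using this
  have hRle : R.card ≤ L.card := by
    rw [← Finset.card_range L.card]
    apply Finset.card_le_card_of_injOn (fun v => d v - 1)
    · intro v hv
      refine Finset.mem_range.2 ?_
      have := hd1 v hv
      have := hdle v hv
      beta_reduce
      omega
    · intro v hv v' hv' h
      apply hdinj hv hv'
      have := hd1 v hv
      have := hd1 v' hv'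
      simp only at h
      omega
  have hcard : L.card = R.card := le_antisymm hLle hRle
  -- surjectivity of c
  have hcimg : L.image c = Finset.range R.card := by
    apply Finset.eq_of_subset_of_card_le
    · intro k hk
      obtain ⟨u, hu, rfl⟩ := Finset.mem_image.1 hk
      exact Finset.mem_range.2 (hclt u hu)
    · rw [Finset.card_range, Finset.card_image_of_injOn hcinj, hcard]
  have hsurjc : ∀ k, k < L.card → ∃ u ∈ L, c u = k := by
    intro k hk
    have : k ∈ Finset.range R.card := Finset.mem_range.2 (hcard ▸ hk)
    rw [← hcimg] at this
    obtain ⟨u, hu, h⟩ := Finset.mem_image.1 this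
    exact ⟨u, hu, h⟩
  -- surjectivity of d
  have hdimg : R.image (fun v => d v - 1) = Finset.range L.card := by
    apply Finset.eq_of_subset_of_card_le
    · intro k hk
      obtain ⟨v, hv, rfl⟩ := Finset.mem_image.1 hk
      have := hd1 v hv
      have := hdle v hv
      refine Finset.mem_range.2 (by omega)
    · rw [Finset.card_range]
      rw [Finset.card_image_of_injOn, hcard]
      intro v hv v' hv' h
      apply hdinj hv hv'
      have := hd1 v hv
      have := hd1 v' hv'
      simp only at h
      omega
  have hsurjd : ∀ k, k < L.card → ∃ v ∈ R, d v = k + 1 := by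
    intro k hk
    have : k ∈ Finset.range L.card := Finset.mem_range.2 hk
    rw [← hdimg] at this
    obtain ⟨v, hv, h⟩ := Finset.mem_image.1 this
    refine ⟨v, hv, ?_⟩
    have := hd1 v hv
    omega
  -- key adjacency lemma
  have hkey : ∀ u ∈ L, ∀ v ∈ R, ((f u : ℕ) ≤ (g v : ℕ) ↔ c u < d v) := by
    intro u hu v hv
    constructor
    · intro h
      have hsub : Finset.range (c u + 1) ⊆
          (L.filter (fun u' => (f u' : ℕ) ≤ (g v : ℕ))).image c := by
        intro k hk
        have hk' : k ≤ c u := by simpa [Nat.lt_succ_iff] using hk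
        have hkL : k < L.card := by
          have := hclt u hu; omega
        obtain ⟨u', hu', hcu'⟩ := hsurjc k hkL
        refine Finset.mem_image.2 ⟨u', ?_, hcu'⟩
        simp only [Finset.mem_filter]
        refine ⟨hu', ?_⟩
        rcases le_total ((f u' : ℕ)) ((f u : ℕ)) with h' | h'
        · omega
        · have : c u ≤ c u' := hcmono u u' h'
          have : u' = u := hcinj hu' hu (by omega)
          subst this
          exact h
      calc c u < c u + 1 := Nat.lt_succ_self _
        _ = (Finset.range (c u + 1)).card := (Finset.card_range _).symm
        _ ≤ ((L.filter (fun u' => (f u' : ℕ) ≤ (g v : ℕ))).image c).card :=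
            Finset.card_le_card hsub
        _ ≤ (L.filter (fun u' => (f u' : ℕ) ≤ (g v : ℕ))).card := Finset.card_image_le
        _ = d v := rfl
    · intro h
      by_contra h'
      push_neg at h'
      have hsub : (L.filter (fun u' => (f u' : ℕ) ≤ (g v : ℕ))).image c ⊆
          Finset.range (c u) := by
        intro k hk
        obtain ⟨u', hu'f, rfl⟩ := Finset.mem_image.1 hk
        simp only [Finset.mem_filter] at hu'f
        obtain ⟨hu', hfu'⟩ := hu'f
        have hle : c u' ≤ c u := hcmono u' u (by omega)
        refine Finset.mem_range.2 ?_
        rcases Nat.lt_or_ge (c u') (c u) with hlt | hge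
        · exact hlt
        · have : u' = u := hcinj hu' hu (by omega)
          subst this
          omega
      have : d v ≤ c u := by
        calc d v = (L.filter (fun u' => (f u' : ℕ) ≤ (g v : ℕ))).card := rfl
          _ = ((L.filter (fun u' => (f u' : ℕ) ≤ (g v : ℕ))).image c).card := by
              rw [Finset.card_image_of_injOn]
              exact hcinj.mono (fun x hx => (Finset.mem_filter.1 hx).1)
          _ ≤ (Finset.range (c u)).card := Finset.card_le_card hsub
          _ = c u := Finset.card_range _
      omega
  -- construction
  have hEx : ∀ i : Fin L.card, ∃ u, u ∈ L ∧ c u = (i : ℕ) := fun i => by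
    obtain ⟨u, hu, h⟩ := hsurjc i i.2; exact ⟨u, hu, h⟩
  have hEy : ∀ i : Fin L.card, ∃ v, v ∈ R ∧ d v = (i : ℕ) + 1 := fun i => by
    obtain ⟨v, hv, h⟩ := hsurjd i i.2; exact ⟨v, hv, h⟩
  choose l hlL hlc using hEx
  choose r hrR hrd using hEy
  refine ⟨hcard, l, r, ?_, ?_, hlL, hrR, ?_, ?_, ?_⟩
  · intro i j h
    apply Fin.ext
    rw [← hlc i, ← hlc j, h]
  · intro i j h
    apply Fin.ext
    have hi := hrd i
    have hj := hrd j
    rw [h] at hi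
    omega
  · intro u hu
    have hcu : c u < L.card := by rw [hcard]; exact hclt u hu
    refine ⟨⟨c u, hcu⟩, ?_⟩
    exact hcinj (hlL _) hu (by rw [hlc])
  · intro v hv
    have h1 := hd1 v hv
    have h2 := hdle v hv
    have hdv : d v - 1 < L.card := by omega
    refine ⟨⟨d v - 1, hdv⟩, ?_⟩
    apply hdinj (hrR _) hv
    rw [hrd]
    simp only
    omega
  · intro i j
    rw [hadj (l i) (hlL i) (r j) (hrR j), hkey (l i) (hlL i) (r j) (hrR j), hlc i, hrd j]
    omega
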